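/- arXiv:2301.13559 — 2 statements merged into one kernel-verified Lean document; each statement's English description precedes it below -/
import Mathlib

section
/- For each α ∈ {1,…,d}, fix a finite set A^α = {x_1^α, …, x_{n_α}^α} ⊂ Z^d ordered so that x_i^α·e_α ≥ x_j^α·e_α whenever i ≤ j, and set A_i^α = {x_j^α + e_α : 1 ≤ j ≤ i} ∪ {x_j^α : i+1 ≤ j ≤ n_α} for 0 ≤ i ≤ n_α. Let L be large enough that all the sets x + A_i^α embed in the torus Z^d/LZ^d. Then for every configuration η ∈ {0,1}^{Z^d/LZ^d} and every α, the total rate of forward transitions equals the total rate of backward transitions: Σ_{i=0}^{n_α−1} Σ_{x ∈ Z^d/LZ^d} 1[η ≡ 0 on x+A_i^α] · η(x + x_{i+1}^α + e_α) = Σ_{i=1}^{n_α} Σ_{x ∈ Z^d/LZ^d} 1[η ≡ 0 on x+A_i^α] · η(x + x_i^α). Equivalently, the total particle current of the auxiliary dynamics vanishes for every configuration on the torus. -/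
noncomputable section
open scoped Classical

namespace KCLGd

/-- Sites of the `d`-dimensional lattice `ℤ^d`. -/
abbrev Site (d : ℕ) := Fin d → ℤ

/-- Particle configurations: a site is *empty* if the value is `false`
and *occupied* if the value is `true`. -/
abbrev Config (d : ℕ) := Site d → Bool

/-- The standard basis vector `e_i`. -/
def unit {d : ℕ} (i : Fin d) : Site d := fun j => if j = i then 1 else 0

/-- `e` is one of the `2d` unit directions `±e_1, …, ±e_d`. -/
def IsDir {d : ℕ} (e : Site d) : Prop := ∃ i : Fin d, e = unit i ∨ e = -unit i

/-- The configuration `η` with the occupation values at `x` and `y` exchanged. -/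
def exch {d : ℕ} (x y : Site d) (η : Config d) : Config d :=
  fun z => if z = x then η y else if z = y then η x else η z

/-- The configuration `η` with the occupation value at `x` flipped. -/
def flipAt {d : ℕ} (x : Site d) (η : Config d) : Config d :=
  fun z => if z = x then !η x else η z

/-- Translated configuration `(τ_z η)(w) = η (w - z)`. -/
def tauC {d : ℕ} (z : Site d) (η : Config d) : Config d := fun w => η (w - z)

/-- Real-valued occupation number (`1` = occupied, `0` = empty). -/
def ind (b : Bool) : ℝ := if b then 1 else 0

/-- Euclidean inner product of `u ∈ ℝ^d` with a lattice vector. -/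
def dot {d : ℕ} (u : Fin d → ℝ) (y : Site d) : ℝ := ∑ i, u i * (y i : ℝ)

/-- A family of jump rates `c_{x,y}(η)` for pairs of sites. -/
abbrev Rates (d : ℕ) := Site d → Site d → Config d → ℝ

/-- Membership in the box `x + [-l, l]^d`. -/
def inBox {d : ℕ} (x : Site d) (l : ℕ) (z : Site d) : Prop := ∀ i, |z i - x i| ≤ (l : ℤ)

/-- A kinetically constrained lattice gas in dimension `d`: nearest-neighbour
jump rates satisfying the standard assumptions (values in `{0} ∪ [1, cmax]`,
independence of the occupation of the exchanged sites, nondegeneracy,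
monotonicity, translation invariance and finite range `R`). -/
structure KCLG (d : ℕ) where
  c : Rates d
  cmax : ℝ
  R : ℕ
  one_le_cmax : 1 ≤ cmax
  rate_range : ∀ x y η, IsDir (y - x) → c x y η = 0 ∨ (1 ≤ c x y η ∧ c x y η ≤ cmax)
  indep : ∀ x y η η', IsDir (y - x) → (∀ z, z ≠ x → z ≠ y → η z = η' z) → c x y η = c x y η'
  nondeg_pos : ∀ x y, IsDir (y - x) → ∃ η, 1 ≤ c x y η
  nondeg_zero : ∀ x y, IsDir (y - x) → ∃ η, c x y η = 0
  mono : ∀ x y η η', IsDir (y - x) → (∀ z, η z ≤ η' z) → c x y η' ≤ c x y η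
  transl : ∀ x y z η, c x y η = c (x + z) (y + z) (tauC z η)
  finRange : ∀ x y η η', IsDir (y - x) → (∀ z, inBox x R z → η z = η' z) → c x y η = c x y η'

/-- A multistep move on the infinite lattice for the rates `c`: a `T`-step
sequence of allowed exchanges, defined for every initial configuration in the
domain. -/
structure Move {d : ℕ} (c : Rates d) where
  T : ℕ
  Dom : Set (Config d)
  cfg : Config d → ℕ → Config d
  xs : Config d → ℕ → Site d
  es : Config d → ℕ → Site d
  init : ∀ a ∈ Dom, cfg a 0 = a
  dir : ∀ a ∈ Dom, ∀ t, t < T → IsDir (es a t)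
  step : ∀ a ∈ Dom, ∀ t, t < T → cfg a (t + 1) = exch (xs a t) (xs a t + es a t) (cfg a t)
  rate : ∀ a ∈ Dom, ∀ t, t < T → 1 ≤ c (xs a t) (xs a t + es a t) (cfg a t)

namespace Move

/-- A move is deterministic if the exchanged edges do not depend on the
initial configuration. -/
def Deterministic {d : ℕ} {c : Rates d} (M : Move c) : Prop :=
  ∀ a ∈ M.Dom, ∀ b ∈ M.Dom, ∀ t, t < M.T → M.xs a t = M.xs b t ∧ M.es a t = M.es b t

/-- The permutation associated with a move and an initial configuration:
the product of the transpositions `(x_{T-1}, x_{T-1}+e_{T-1}) ⋯ (x_0, x_0+e_0)`. -/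
def permOf {d : ℕ} {c : Rates d} (M : Move c) (a : Config d) : Equiv.Perm (Site d) :=
  (List.range M.T).foldl (fun σ t => Equiv.swap (M.xs a t) (M.xs a t + M.es a t) * σ) 1

/-- A move is compatible with the permutation `σ` if its associated
permutation equals `σ` for every configuration in the domain. -/
def CompatibleWith {d : ℕ} {c : Rates d} (M : Move c) (σ : Equiv.Perm (Site d)) : Prop :=
  ∀ a ∈ M.Dom, M.permOf a = σ

/-- The tracer position associated with a move, starting at `z0`. -/
def tracer {d : ℕ} {c : Rates d} (M : Move c) (a : Config d) (z0 : Site d) : ℕ → Site d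
  | 0 => z0
  | t + 1 =>
    if M.tracer a z0 t = M.xs a t ∧ M.cfg a t (M.xs a t + M.es a t) = false then
      M.xs a t + M.es a t
    else if M.tracer a z0 t = M.xs a t + M.es a t ∧ M.cfg a t (M.xs a t) = false then
      M.xs a t
    else M.tracer a z0 t

end Move

/-- `M` is a translation move `Tr_e(x+C)` in `x + [-l,l]^d`. -/
def IsTrMove {d : ℕ} (c : Rates d) (C : Finset (Site d)) (l : ℕ) (e x : Site d)
    (M : Move c) : Prop :=
  M.Dom = {η : Config d | ∀ y ∈ C, η (x + y) = false} ∧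
  M.Deterministic ∧
  (∃ σ : Equiv.Perm (Site d), M.CompatibleWith σ ∧ ∀ y ∈ C, σ (x + y) = x + y + e) ∧
  ∀ a ∈ M.Dom, ∀ t, t < M.T → inBox x l (M.xs a t) ∧ inBox x l (M.xs a t + M.es a t)

/-- `M` is an exchange move `Ex_e(x+C)`. -/
def IsExMove {d : ℕ} (c : Rates d) (C : Finset (Site d)) (l : ℕ) (e x : Site d)
    (M : Move c) : Prop :=
  M.Dom = {η : Config d | ∀ y ∈ C, η (x + y) = false} ∧
  M.Deterministic ∧
  M.CompatibleWith (Equiv.swap (x + (l : ℤ) • e) (x + (l : ℤ) • e + e)) ∧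
  ∀ a ∈ M.Dom, ∀ t, t < M.T →
    (inBox x l (M.xs a t) ∨ M.xs a t = x + ((l : ℤ) + 1) • e) ∧
    (inBox x l (M.xs a t + M.es a t) ∨ M.xs a t + M.es a t = x + ((l : ℤ) + 1) • e)

/-- A translation move of `x + C` in direction `e` exists. -/
def HasTr {d : ℕ} (c : Rates d) (C : Finset (Site d)) (l : ℕ) (e x : Site d) : Prop :=
  ∃ M : Move c, IsTrMove c C l e x M

/-- An exchange move using `x + C` in direction `e` exists. -/
def HasEx {d : ℕ} (c : Rates d) (C : Finset (Site d)) (l : ℕ) (e x : Site d) : Prop :=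
  ∃ M : Move c, IsExMove c C l e x M

/-- `C` is a mobile cluster, with parameter `l`. -/
def IsMobileClusterWith {d : ℕ} (c : Rates d) (C : Finset (Site d)) (l : ℕ) : Prop :=
  0 < l ∧ ∀ e, IsDir e → ∀ x, HasTr c C l e x ∧ HasEx c C l e x

/-- `C` is a mobile cluster. -/
def IsMobileCluster {d : ℕ} (c : Rates d) (C : Finset (Site d)) : Prop :=
  ∃ l : ℕ, IsMobileClusterWith c C l

/-- A kinetically constrained lattice gas is noncooperative if it admits a
mobile cluster. -/
def Noncooperative {d : ℕ} (c : Rates d) : Prop :=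
  ∃ C : Finset (Site d), IsMobileCluster c C

/-! ### Finite boxes, measures and Dirichlet forms -/

/-- The box `Λ = [L]^d = {1, …, L}^d`. -/
def boxL (d L : ℕ) : Finset (Site d) := Fintype.piFinset fun _ => Finset.Icc 1 (L : ℤ)

/-- Extension of a configuration on `Λ` to the whole lattice by the boundary
value `bc` (`false` = empty boundary conditions, `true` = occupied). -/
def extB {d : ℕ} (Λ : Finset (Site d)) (bc : Bool) (σ : {x // x ∈ Λ} → Bool) : Config d :=
  fun z => if h : z ∈ Λ then σ ⟨z, h⟩ else bc

/-- Bernoulli weight of a configuration on `Λ`: each site independently empty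
with probability `q`. -/
def wt {d : ℕ} (q : ℝ) (Λ : Finset (Site d)) (σ : {x // x ∈ Λ} → Bool) : ℝ :=
  ∏ x : {x // x ∈ Λ}, (if σ x then 1 - q else q)

/-- Expectation with respect to the Bernoulli product measure `μ` on `{0,1}^Λ`. -/
def expB {d : ℕ} (q : ℝ) (Λ : Finset (Site d)) (F : ({x // x ∈ Λ} → Bool) → ℝ) : ℝ :=
  ∑ σ : {x // x ∈ Λ} → Bool, wt q Λ σ * F σ

/-- Variance with respect to the Bernoulli product measure on `{0,1}^Λ`. -/
def varB {d : ℕ} (q : ℝ) (Λ : Finset (Site d)) (F : ({x // x ∈ Λ} → Bool) → ℝ) : ℝ :=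
  expB q Λ fun σ => (F σ - expB q Λ F) ^ 2

/-- `x` belongs to the boundary `∂Λ`: it lies in `Λ` and has a neighbour
outside `Λ`. -/
def isBdry {d : ℕ} (Λ : Finset (Site d)) (x : Site d) : Prop :=
  x ∈ Λ ∧ ∃ i : Fin d, x + unit i ∉ Λ ∨ x - unit i ∉ Λ

/-- Number of empty sites of `η` inside `Λ`. -/
def nEmptyIn {d : ℕ} (Λ : Finset (Site d)) (η : Config d) : ℕ :=
  (Λ.filter fun x => η x = false).card

/-! ### Local functions and expectations on the infinite lattice -/

/-- `F` depends only on the coordinates in `S`. -/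
def IsLocal {d : ℕ} (F : Config d → ℝ) (S : Finset (Site d)) : Prop :=
  ∀ η η' : Config d, (∀ x ∈ S, η x = η' x) → F η = F η'

/-- Expectation, with respect to the Bernoulli product measure in which each
site is independently empty with probability `q`, of a function depending only
on the coordinates in `T`. -/
def dExp {d : ℕ} (q : ℝ) (T : Finset (Site d)) (F : Config d → ℝ) : ℝ :=
  ∑ σ : {x // x ∈ T} → Bool, wt q T σ * F (extB T true σ)

/-- Expectation with respect to the Bernoulli product measure `μ = μ_q` of a
local function (junk value `0` for nonlocal functions). -/
def dExpGen {d : ℕ} (q : ℝ) (F : Config d → ℝ) : ℝ :=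
  if h : ∃ T : Finset (Site d), IsLocal F T then dExp q h.choose F else 0

/-- Conditioning on the origin being occupied. -/
def cond0 {d : ℕ} (F : Config d → ℝ) : Config d → ℝ :=
  fun η => F fun z => if z = 0 then true else η z

/-- Expectation with respect to `μ_0`, the measure `μ` conditioned on the
origin being occupied. -/
def dExpGen0 {d : ℕ} (q : ℝ) (F : Config d → ℝ) : ℝ := dExpGen q (cond0 F)

/-! ### The diffusion coefficient -/

/-- The integrand in the variational formula for the diffusion coefficient:
`Σ_α c_{0,e_α}(η) ( u·e_α (η(0) - η(e_α)) + Σ_x ∇_{0,e_α}(τ_x f)(η) )²`. -/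
def diffIntegrand {d : ℕ} (c : Rates d) (u : Fin d → ℝ) (f : Config d → ℝ)
    (η : Config d) : ℝ :=
  ∑ α : Fin d, c 0 (unit α) η *
    (u α * (ind (η 0) - ind (η (unit α))) +
      ∑' x : Site d, (f (tauC (-x) (exch 0 (unit α) η)) - f (tauC (-x) η))) ^ 2

/-- The set of values of the variational functional for the diffusion
coefficient, over all local functions `f`. -/
def diffSet {d : ℕ} (c : Rates d) (q : ℝ) (u : Fin d → ℝ) : Set ℝ :=
  {E | ∃ (f : Config d → ℝ) (S : Finset (Site d)), IsLocal f S ∧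
    E = dExpGen q (diffIntegrand c u f)}

/-- The diffusion coefficient `u ⬝ D u`, defined through the variational
formula. -/
def diffCoeff {d : ℕ} (c : Rates d) (q : ℝ) (u : Fin d → ℝ) : ℝ :=
  (1 / (2 * q * (1 - q))) * sInf (diffSet c q u)

/-! ### The self-diffusion coefficient -/

/-- The `2d` neighbours of the origin. -/
def nbhd (d : ℕ) : Finset (Site d) :=
  (Finset.univ.image fun i : Fin d => unit i) ∪ (Finset.univ.image fun i : Fin d => -unit i)

/-- The integrand in the variational formula for the self-diffusion
coefficient. -/
def selfIntegrand {d : ℕ} (c : Rates d) (u : Fin d → ℝ) (f : Config d → ℝ)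
    (η : Config d) : ℝ :=
  (∑' x : Site d, ∑ α : Fin d,
      if x ≠ 0 ∧ x + unit α ≠ 0 then
        c x (x + unit α) η * (f (exch x (x + unit α) η) - f η) ^ 2
      else 0) +
  ∑ y ∈ nbhd d, c 0 y η * (1 - ind (η y)) *
      (dot u y + f (tauC (-y) (exch 0 y η)) - f η) ^ 2

/-- The set of values of the variational functional for the self-diffusion
coefficient, over all local functions `f` on `{η : η(0) = 1}`. -/
def selfSet {d : ℕ} (c : Rates d) (q : ℝ) (u : Fin d → ℝ) : Set ℝ :=
  {E | ∃ (f : Config d → ℝ) (S : Finset (Site d)), IsLocal f S ∧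
    E = dExpGen0 q (selfIntegrand c u f)}

/-- The self-diffusion coefficient `u ⬝ D_s u`. -/
def selfDiff {d : ℕ} (c : Rates d) (q : ℝ) (u : Fin d → ℝ) : ℝ :=
  (1 / 2) * sInf (selfSet c q u)

/-! ### Generalized tracer models -/

/-- Action of a permutation of the sites on configurations: `(σζ)(y) = ζ(σ⁻¹ y)`. -/
def permAct {d : ℕ} (σ : Equiv.Perm (Site d)) (ζ : Config d) : Config d :=
  fun y => ζ (σ.symm y)

/-- A permutation of `ℤ^d` has finite range: it fixes all sites outside some
translate of `[-R', R']^d`. -/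
def FinRangePerm {d : ℕ} (σ : Equiv.Perm (Site d)) : Prop :=
  ∃ (x : Site d) (R' : ℕ), ∀ w, σ w ≠ w → ∀ i, |w i - x i| ≤ (R' : ℤ)

/-- The reversed permutation `σ' = τ_{-σ(0)} σ⁻¹ τ_{σ(0)}`. -/
def conjPerm {d : ℕ} (σ : Equiv.Perm (Site d)) : Equiv.Perm (Site d) :=
  (Equiv.addRight (σ 0)).trans (σ.symm.trans (Equiv.addRight (-(σ 0))))

/-- Summand of the variational functional of a generalized tracer model:
`ĉ_σ(ζ) (u·σ(0) + f(τ_{-σ(0)} σ ζ) - f(ζ))²`. -/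
def tracerSummand {d : ℕ} (chat : Equiv.Perm (Site d) → Config d → ℝ) (u : Fin d → ℝ)
    (σ : Equiv.Perm (Site d)) (f : Config d → ℝ) (ζ : Config d) : ℝ :=
  chat σ ζ * (dot u (σ 0) + f (tauC (-(σ 0)) (permAct σ ζ)) - f ζ) ^ 2

/-- Values of the variational functional for the self-diffusion coefficient of
a generalized tracer model, over all local functions. -/
def tracerSet {d : ℕ} (Ss : Set (Equiv.Perm (Site d)))
    (chat : Equiv.Perm (Site d) → Config d → ℝ) (q : ℝ) (u : Fin d → ℝ) : Set ℝ :=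
  {E | ∃ (f : Config d → ℝ) (S : Finset (Site d)), IsLocal f S ∧
    E = ∑' σ : Ss, dExpGen0 q (tracerSummand chat u (σ : Equiv.Perm (Site d)) f)}

/-- The self-diffusion coefficient `u ⬝ D̂_s u` of a generalized tracer model. -/
def tracerDs {d : ℕ} (Ss : Set (Equiv.Perm (Site d)))
    (chat : Equiv.Perm (Site d) → Config d → ℝ) (q : ℝ) (u : Fin d → ℝ) : ℝ :=
  (1 / 2) * sInf (tracerSet Ss chat q u)

/-! ### Moves on finite boxes -/

/-- A multistep move on the finite box `Λ` with boundary condition `bc`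
(all exchanges take place inside `Λ`; rates are evaluated on the extension of
the configuration by `bc` outside `Λ`, encoded in the domain). -/
structure MoveBox {d : ℕ} (c : Rates d) (Λ : Finset (Site d)) (bc : Bool) where
  T : ℕ
  Dom : Set (Config d)
  cfg : Config d → ℕ → Config d
  xs : Config d → ℕ → Site d
  es : Config d → ℕ → Site d
  dom_bc : ∀ a ∈ Dom, ∀ x, x ∉ Λ → a x = bc
  init : ∀ a ∈ Dom, cfg a 0 = a
  dir : ∀ a ∈ Dom, ∀ t, t < T → IsDir (es a t)
  mem : ∀ a ∈ Dom, ∀ t, t < T → xs a t ∈ Λ ∧ xs a t + es a t ∈ Λ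
  step : ∀ a ∈ Dom, ∀ t, t < T → cfg a (t + 1) = exch (xs a t) (xs a t + es a t) (cfg a t)
  rate : ∀ a ∈ Dom, ∀ t, t < T → 1 ≤ c (xs a t) (xs a t + es a t) (cfg a t)

/-- A multistep move on the finite box `Λ` with empty boundary conditions and
reservoirs: each step is either an allowed exchange inside `Λ`, or a flip of a
boundary site. -/
structure MoveRes {d : ℕ} (c : Rates d) (Λ : Finset (Site d)) where
  T : ℕ
  Dom : Set (Config d)
  cfg : Config d → ℕ → Config d
  xs : Config d → ℕ → Site d
  es : Config d → ℕ → Site d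
  dom_bc : ∀ a ∈ Dom, ∀ x, x ∉ Λ → a x = false
  init : ∀ a ∈ Dom, cfg a 0 = a
  step : ∀ a ∈ Dom, ∀ t, t < T →
    (xs a t ∈ Λ ∧ xs a t + es a t ∈ Λ ∧ IsDir (es a t) ∧
      cfg a (t + 1) = exch (xs a t) (xs a t + es a t) (cfg a t) ∧
      1 ≤ c (xs a t) (xs a t + es a t) (cfg a t)) ∨
    (isBdry Λ (xs a t) ∧ cfg a (t + 1) = flipAt (xs a t) (cfg a t))

end KCLGd

namespace KCLGd

/-- The sets `A_i^α` of the auxiliary dynamics: `A_i^α` is obtained from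
`A^α = {x_1^α, …, x_{n_α}^α}` by moving the first `i` points one step in the
direction `e_α`. -/
def Aset (d : ℕ) (nn : Fin d → ℕ) (xs : (α : Fin d) → Fin (nn α) → Site d)
    (α : Fin d) (i : ℕ) : Finset (Site d) :=
  ((Finset.univ.filter fun j : Fin (nn α) => (j : ℕ) < i).image fun j => xs α j + unit α) ∪
  ((Finset.univ.filter fun j : Fin (nn α) => i ≤ (j : ℕ)).image fun j => xs α j)

/-- Reduction of a lattice site modulo `L`: the projection `ℤ^d → (ℤ/Lℤ)^d`. -/
def torusCast (d L : ℕ) (x : Site d) : Fin d → ZMod L := fun j => (x j : ZMod L)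

lemma torusCast_add (d L : ℕ) (x y : Site d) :
    torusCast d L (x + y) = torusCast d L x + torusCast d L y := by
  funext j
  simp [torusCast, Pi.add_apply]

lemma mem_Aset {d : ℕ} {nn : Fin d → ℕ} {xs : (α : Fin d) → Fin (nn α) → Site d}
    {α : Fin d} {i : ℕ} {y : Site d} :
    y ∈ Aset d nn xs α i ↔
      (∃ j : Fin (nn α), (j : ℕ) < i ∧ xs α j + unit α = y) ∨
      (∃ j : Fin (nn α), i ≤ (j : ℕ) ∧ xs α j = y) := by
  simp [Aset]

/-- On the torus `(ℤ/Lℤ)^d`, for every configuration `η` and every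
direction `α`, the total rate of forward transitions of the auxiliary dynamics equals
the total rate of backward transitions: the total particle current vanishes. -/
theorem zero_current_on_torus (d : ℕ) (L : ℕ) [NeZero L]
    (nn : Fin d → ℕ) (xs : (α : Fin d) → Fin (nn α) → Site d)
    (hord : ∀ (α : Fin d) (i j : Fin (nn α)), i ≤ j → (xs α j) α ≤ (xs α i) α)
    (hinj : ∀ α, Function.Injective (xs α))
    (hemb : ∀ (α : Fin d) (i : Fin (nn α)),
      Set.InjOn (torusCast d L)
        ↑(Aset d nn xs α (i : ℕ) ∪ Aset d nn xs α ((i : ℕ) + 1) ∪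
          {xs α i, xs α i + unit α}))
    (η : (Fin d → ZMod L) → Bool) (α : Fin d) :
    (∑ i : Fin (nn α), ∑ x : Fin d → ZMod L,
        if (∀ y ∈ Aset d nn xs α (i : ℕ), η (x + torusCast d L y) = false) ∧
            η (x + torusCast d L (xs α i + unit α)) = true then 1 else 0) =
    (∑ i : Fin (nn α), ∑ x : Fin d → ZMod L,
        if (∀ y ∈ Aset d nn xs α ((i : ℕ) + 1), η (x + torusCast d L y) = false) ∧
            η (x + torusCast d L (xs α i)) = true then 1 else 0) := by
  classical
  set N := nn α with hN
  -- `a i` counts the `x` for which `x + A_i` is empty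
  set a : ℕ → ℕ := fun i => ∑ x : Fin d → ZMod L,
    if (∀ y ∈ Aset d nn xs α i, η (x + torusCast d L y) = false) then 1 else 0 with ha
  -- membership facts
  have hmemL : ∀ i : Fin N, xs α i ∈ Aset d nn xs α (i : ℕ) := by
    intro i
    exact mem_Aset.mpr (Or.inr ⟨i, le_rfl, rfl⟩)
  have hmemR : ∀ i : Fin N, xs α i + unit α ∈ Aset d nn xs α ((i : ℕ) + 1) := by
    intro i
    exact mem_Aset.mpr (Or.inl ⟨i, Nat.lt_succ_self _, rfl⟩)
  have hsub1 : ∀ (i : Fin N), ∀ y ∈ Aset d nn xs α ((i : ℕ) + 1),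
      y ∈ Aset d nn xs α (i : ℕ) ∨ y = xs α i + unit α := by
    intro i y hy
    rcases mem_Aset.mp hy with ⟨j, hj, rfl⟩ | ⟨j, hj, rfl⟩
    · rcases Nat.lt_succ_iff_lt_or_eq.mp hj with h | h
      · exact Or.inl (mem_Aset.mpr (Or.inl ⟨j, h, rfl⟩))
      · right
        have : j = i := Fin.ext h
        rw [this]
    · exact Or.inl (mem_Aset.mpr (Or.inr ⟨j, Nat.le_of_succ_le hj, rfl⟩))
  have hsub2 : ∀ (i : Fin N), ∀ y ∈ Aset d nn xs α (i : ℕ),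
      y ∈ Aset d nn xs α ((i : ℕ) + 1) ∨ y = xs α i := by
    intro i y hy
    rcases mem_Aset.mp hy with ⟨j, hj, rfl⟩ | ⟨j, hj, rfl⟩
    · exact Or.inl (mem_Aset.mpr (Or.inl ⟨j, Nat.lt_succ_of_lt hj, rfl⟩))
    · rcases Nat.lt_or_ge (i : ℕ) (j : ℕ) with h | h
      · exact Or.inl (mem_Aset.mpr (Or.inr ⟨j, h, rfl⟩))
      · right
        have : j = i := Fin.ext (le_antisymm h hj)
        rw [this]
  -- pointwise detailed-balance identity
  have key : ∀ (i : Fin N) (x : Fin d → ZMod L),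
      ((if (∀ y ∈ Aset d nn xs α (i : ℕ), η (x + torusCast d L y) = false) ∧
          η (x + torusCast d L (xs α i + unit α)) = true then 1 else 0)
        + (if (∀ y ∈ Aset d nn xs α ((i : ℕ) + 1), η (x + torusCast d L y) = false)
            then 1 else 0))
      = ((if (∀ y ∈ Aset d nn xs α ((i : ℕ) + 1), η (x + torusCast d L y) = false) ∧
          η (x + torusCast d L (xs α i)) = true then 1 else 0)
        + (if (∀ y ∈ Aset d nn xs α (i : ℕ), η (x + torusCast d L y) = false)
            then 1 else 0)) := by
    intro i x
    have h1 : (∀ y ∈ Aset d nn xs α (i : ℕ), η (x + torusCast d L y) = false) →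
        η (x + torusCast d L (xs α i)) = false := fun h => h _ (hmemL i)
    have h2 : (∀ y ∈ Aset d nn xs α ((i : ℕ) + 1), η (x + torusCast d L y) = false) →
        η (x + torusCast d L (xs α i + unit α)) = false := fun h => h _ (hmemR i)
    have h3 : (∀ y ∈ Aset d nn xs α (i : ℕ), η (x + torusCast d L y) = false) →
        η (x + torusCast d L (xs α i + unit α)) = false →
        (∀ y ∈ Aset d nn xs α ((i : ℕ) + 1), η (x + torusCast d L y) = false) := by
      intro hP hu y hy
      rcases hsub1 i y hy with h | h
      · exact hP y h
      · rw [h]; exact hu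
    have h4 : (∀ y ∈ Aset d nn xs α ((i : ℕ) + 1), η (x + torusCast d L y) = false) →
        η (x + torusCast d L (xs α i)) = false →
        (∀ y ∈ Aset d nn xs α (i : ℕ), η (x + torusCast d L y) = false) := by
      intro hQ hv y hy
      rcases hsub2 i y hy with h | h
      · exact hQ y h
      · rw [h]; exact hv
    by_cases hP : (∀ y ∈ Aset d nn xs α (i : ℕ), η (x + torusCast d L y) = false) <;>
      by_cases hQ : (∀ y ∈ Aset d nn xs α ((i : ℕ) + 1), η (x + torusCast d L y) = false)
    · have hu := h2 hQ
      have hv := h1 hP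
      rw [if_neg (by rintro ⟨-, h⟩; rw [hu] at h; cases h), if_pos hQ,
        if_neg (by rintro ⟨-, h⟩; rw [hv] at h; cases h), if_pos hP]
    · have hu : η (x + torusCast d L (xs α i + unit α)) = true := by
        rcases Bool.eq_false_or_eq_true (η (x + torusCast d L (xs α i + unit α))) with h | h
        · exact h
        · exact absurd (h3 hP h) hQ
      rw [if_pos ⟨hP, hu⟩, if_neg hQ, if_neg (fun h => hQ h.1), if_pos hP]
    · have hv : η (x + torusCast d L (xs α i)) = true := by
        rcases Bool.eq_false_or_eq_true (η (x + torusCast d L (xs α i))) with h | h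
        · exact h
        · exact absurd (h4 hQ h) hP
      rw [if_neg (fun h => hP h.1), if_pos hQ, if_pos ⟨hQ, hv⟩, if_neg hP]
    · rw [if_neg (fun h => hP h.1), if_neg hQ, if_neg (fun h => hQ h.1), if_neg hP]
  -- the shift identity `a N = a 0`
  have hAN : ∀ y : Site d, y ∈ Aset d nn xs α N ↔ ∃ j : Fin N, xs α j + unit α = y := by
    intro y
    rw [mem_Aset]
    constructor
    · rintro (⟨j, _, h⟩ | ⟨j, hj, h⟩)
      · exact ⟨j, h⟩
      · exact absurd hj (by have := j.isLt; omega)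
    · rintro ⟨j, h⟩
      exact Or.inl ⟨j, j.isLt, h⟩
  have hA0 : ∀ y : Site d, y ∈ Aset d nn xs α 0 ↔ ∃ j : Fin N, xs α j = y := by
    intro y
    rw [mem_Aset]
    constructor
    · rintro (⟨j, hj, h⟩ | ⟨j, _, h⟩)
      · exact absurd hj (by omega)
      · exact ⟨j, h⟩
    · rintro ⟨j, h⟩
      exact Or.inr ⟨j, Nat.zero_le _, h⟩
  have harg : ∀ (x : Fin d → ZMod L) (z : Site d),
      (x + torusCast d L (unit α)) + torusCast d L z = x + torusCast d L (z + unit α) := by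
    intro x z
    rw [torusCast_add]
    abel
  have hshift : a N = a 0 := by
    simp only [ha]
    refine Fintype.sum_equiv (Equiv.addRight (torusCast d L (unit α))) _ _ ?_
    intro x
    simp only [Equiv.coe_addRight]
    refine if_congr ?_ rfl rfl
    constructor
    · intro h y hy
      obtain ⟨j, rfl⟩ := (hA0 y).mp hy
      have := h _ ((hAN _).mpr ⟨j, rfl⟩)
      rw [← harg x (xs α j)] at this
      exact this
    · intro h y hy
      obtain ⟨j, rfl⟩ := (hAN y).mp hy
      have := h _ ((hA0 _).mpr ⟨j, rfl⟩)
      rw [harg x (xs α j)] at this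
      exact this
  -- summing the pointwise identity
  have sumkey :
      (∑ i : Fin N, ∑ x : Fin d → ZMod L,
        if (∀ y ∈ Aset d nn xs α (i : ℕ), η (x + torusCast d L y) = false) ∧
            η (x + torusCast d L (xs α i + unit α)) = true then 1 else 0)
      + ∑ i : Fin N, a ((i : ℕ) + 1)
      = (∑ i : Fin N, ∑ x : Fin d → ZMod L,
        if (∀ y ∈ Aset d nn xs α ((i : ℕ) + 1), η (x + torusCast d L y) = false) ∧
            η (x + torusCast d L (xs α i)) = true then 1 else 0)
      + ∑ i : Fin N, a (i : ℕ) := by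
    rw [← Finset.sum_add_distrib, ← Finset.sum_add_distrib]
    refine Finset.sum_congr rfl fun i _ => ?_
    simp only [ha]
    rw [← Finset.sum_add_distrib, ← Finset.sum_add_distrib]
    refine Finset.sum_congr rfl fun x _ => ?_
    have h := key i x
    convert h using 2
    congr!
  -- telescoping
  have htel : (∑ i : Fin N, a ((i : ℕ) + 1)) = ∑ i : Fin N, a (i : ℕ) := by
    have e1 : (∑ i : Fin N, a ((i : ℕ) + 1)) = ∑ i ∈ Finset.range N, a (i + 1) :=
      Fin.sum_univ_eq_sum_range (fun i => a (i + 1)) N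
    have e2 : (∑ i : Fin N, a (i : ℕ)) = ∑ i ∈ Finset.range N, a i :=
      Fin.sum_univ_eq_sum_range a N
    have e3 : (∑ i ∈ Finset.range N, a (i + 1)) + a 0 = (∑ i ∈ Finset.range N, a i) + a N := by
      rw [← Finset.sum_range_succ' a N, Finset.sum_range_succ a N]
    rw [e1, e2]
    rw [hshift] at e3
    exact Nat.add_right_cancel e3
  rw [htel] at sumkey
  exact Nat.add_right_cancel sumkey

end KCLGd
end
end

section
/- Fix a finite set Ĉ ⊂ Z^d \ {0} and finite-range permutations σ_1,…,σ_d of Z^d with σ_i(0) = e_i and σ_i(Ĉ) = e_i + Ĉ; set σ_{−i} = τ_{−e_i} σ_i^{−1} τ_{e_i}, Σ = {σ_{±1},…,σ_{±d}}, and ĉ_σ(ζ) = 1 if Ĉ is empty for ζ and 0 otherwise. Then for every u ∈ ℝ^d the infimum over local functions f on {ζ : ζ(0)=1} of Σ_{σ∈Σ} μ_0[ 1[Ĉ empty for ζ] ( u·σ(0) + f(τ_{−σ(0)} σ ζ) − f(ζ) )² ] equals 2 q^{|Ĉ|} ‖u‖², and is attained at constant f; equivalently, the self-diffusion coefficient of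 this auxiliary tracer model satisfies u·D̂_s u = q^{|Ĉ|} ‖u‖², and in particular u·D̂_s u ≥ (1/2) q^{|Ĉ|} ‖u‖² > 0 for u ≠ 0. -/
noncomputable section
open scoped Classical

namespace KCLGd

/-- The permutation family `Σ = {σ_{±1}, …, σ_{±d}}`. -/
def auxSigma {d : ℕ} (σs : Fin d → Equiv.Perm (Site d)) : Set (Equiv.Perm (Site d)) :=
  {σ | ∃ i, σ = σs i ∨ σ = conjPerm (σs i)}

/-- The rate `ĉ_σ(ζ) = 1` if `Ĉ` is empty for `ζ` and `0` otherwise. -/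
def auxRate {d : ℕ} (Chat : Finset (Site d)) : Equiv.Perm (Site d) → Config d → ℝ :=
  fun _ ζ => if ∀ y ∈ Chat, ζ y = false then 1 else 0

section Infra

variable {d : ℕ}

lemma isLocal_mono {F : Config d → ℝ} {S T : Finset (Site d)}
    (hF : IsLocal F S) (hST : S ⊆ T) : IsLocal F T :=
  fun η η' h => hF η η' fun x hx => h x (hST hx)

lemma dExp_insert (q : ℝ) {F : Config d → ℝ} {T : Finset (Site d)}
    (hF : IsLocal F T) {a : Site d} (ha : a ∉ T) :
    dExp q (insert a T) F = dExp q T F := by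
  classical
  let e : Bool × ({x // x ∈ T} → Bool) ≃ ({x : Site d // x ∈ insert a T} → Bool) :=
  { toFun := fun p x => if h : (x : Site d) ∈ T then p.2 ⟨x, h⟩ else p.1
    invFun := fun σ => (σ ⟨a, Finset.mem_insert_self a T⟩,
      fun x => σ ⟨x, Finset.mem_insert_of_mem x.2⟩)
    left_inv := by
      rintro ⟨b, τ⟩
      refine Prod.ext ?_ ?_
      · simp [ha]
      · funext x
        simp [x.2]
    right_inv := by
      intro σ; funext x
      dsimp only
      rcases Finset.mem_insert.mp x.2 with hx | hx
      · rw [dif_neg (by rw [hx]; exact ha)]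
        exact congrArg σ (Subtype.ext hx.symm)
      · rw [dif_pos hx] }
  have heval : ∀ (b : Bool) (τ : {x // x ∈ T} → Bool) (x : {x : Site d // x ∈ insert a T}),
      e (b, τ) x = if h : (x : Site d) ∈ T then τ ⟨x, h⟩ else b := fun _ _ _ => rfl
  have key : ∀ p : Bool × ({x // x ∈ T} → Bool),
      wt q (insert a T) (e p) * F (extB (insert a T) true (e p)) =
        (if p.1 then 1 - q else q) * (wt q T p.2 * F (extB T true p.2)) := by
    rintro ⟨b, τ⟩
    have hw : wt q (insert a T) (e (b, τ)) = (if b then 1 - q else q) * wt q T τ := by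
      have h1 : wt q (insert a T) (e (b, τ)) =
          ∏ z ∈ insert a T, (if (if h : z ∈ T then τ ⟨z, h⟩ else b) then 1 - q else q) := by
        rw [wt, Finset.prod_subtype (insert a T) (fun _ => Iff.rfl)
          (fun z => (if (if h : z ∈ T then τ ⟨z, h⟩ else b) then 1 - q else q))]
        exact Finset.prod_congr rfl fun x _ => by rw [heval]
      rw [h1, Finset.prod_insert ha, dif_neg ha]
      congr 1
      rw [wt, Finset.prod_subtype T (fun _ => Iff.rfl)
        (fun z => (if (if h : z ∈ T then τ ⟨z, h⟩ else b) then 1 - q else q))]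
      exact Finset.prod_congr rfl fun x _ => by rw [dif_pos x.2]
    have hFeq : F (extB (insert a T) true (e (b, τ))) = F (extB T true τ) := by
      apply hF
      intro x hx
      have h1 : extB (insert a T) true (e (b, τ)) x = τ ⟨x, hx⟩ := by
        show (if h : x ∈ insert a T then e (b, τ) ⟨x, h⟩ else true) = τ ⟨x, hx⟩
        rw [dif_pos (Finset.mem_insert_of_mem hx), heval]
        exact dif_pos hx
      have h2 : extB T true τ x = τ ⟨x, hx⟩ := dif_pos hx
      rw [h1, h2]
    rw [hw, hFeq]; ring
  have hsum : dExp q (insert a T) F =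
      ∑ p : Bool × ({x // x ∈ T} → Bool),
        (if p.1 then 1 - q else q) * (wt q T p.2 * F (extB T true p.2)) := by
    rw [show dExp q (insert a T) F = ∑ σ : {x : Site d // x ∈ insert a T} → Bool,
        wt q (insert a T) σ * F (extB (insert a T) true σ) from rfl,
      ← Equiv.sum_comp e (fun σ => wt q (insert a T) σ * F (extB (insert a T) true σ))]
    exact Finset.sum_congr rfl fun p _ => key p
  rw [hsum, Fintype.sum_prod_type]
  have : ∀ b : Bool, ∑ τ : {x // x ∈ T} → Bool,
      (if b then 1 - q else q) * (wt q T τ * F (extB T true τ)) =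
        (if b then 1 - q else q) * dExp q T F := by
    intro b; rw [← Finset.mul_sum]; rfl
  rw [Fintype.sum_bool, this true, this false]
  simp only [if_true, Bool.false_eq_true, if_false]
  ring

lemma dExp_subset (q : ℝ) {F : Config d → ℝ} {S T : Finset (Site d)}
    (hF : IsLocal F S) (hST : S ⊆ T) : dExp q T F = dExp q S F := by
  classical
  have main : ∀ U : Finset (Site d), dExp q (S ∪ U) F = dExp q S F := by
    intro U
    induction U using Finset.induction_on with
    | empty => rw [Finset.union_empty]
    | @insert a U ha ih =>
      by_cases haSU : a ∈ S ∪ U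
      · rw [Finset.union_insert, Finset.insert_eq_self.mpr haSU, ih]
      · rw [Finset.union_insert,
          dExp_insert q (isLocal_mono hF Finset.subset_union_left) haSU, ih]
  have := main T
  rwa [Finset.union_eq_right.mpr hST] at this

lemma dExp_congr (q : ℝ) {F : Config d → ℝ} {S T : Finset (Site d)}
    (hS : IsLocal F S) (hT : IsLocal F T) : dExp q S F = dExp q T F := by
  rw [← dExp_subset q hS Finset.subset_union_left (T := S ∪ T),
    ← dExp_subset q hT Finset.subset_union_right (T := S ∪ T)]

lemma dExpGen_eq (q : ℝ) {F : Config d → ℝ} {S : Finset (Site d)}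
    (hS : IsLocal F S) : dExpGen q F = dExp q S F := by
  rw [dExpGen, dif_pos ⟨S, hS⟩]
  exact dExp_congr q (Exists.choose_spec (⟨S, hS⟩ : ∃ T, IsLocal F T)) hS

end Infra

section Infra2

variable {d : ℕ}

lemma dExp_indicator (q : ℝ) (C T : Finset (Site d)) (hsub : C ⊆ T) (c : ℝ) :
    dExp q T (fun ζ => if (∀ y ∈ C, ζ y = false) then c else 0) = c * q ^ C.card := by
  classical
  have hstep : ∀ σ : {x // x ∈ T} → Bool,
      wt q T σ * (if (∀ y ∈ C, extB T true σ y = false) then c else 0) =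
        c * ∏ x : {x // x ∈ T},
          ((if σ x then 1 - q else q) * (if (x : Site d) ∈ C ∧ σ x = true then 0 else 1)) := by
    intro σ
    rw [Finset.prod_mul_distrib]
    have hext : ∀ y (hy : y ∈ C), extB T true σ y = σ ⟨y, hsub hy⟩ := fun y hy =>
      dif_pos (hsub hy)
    by_cases hP : ∀ y ∈ C, extB T true σ y = false
    · rw [if_pos hP]
      have h1 : ∏ x : {x // x ∈ T}, (if (x : Site d) ∈ C ∧ σ x = true then (0:ℝ) else 1) = 1 := by
        apply Finset.prod_eq_one
        intro x _
        rw [if_neg]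
        rintro ⟨hx1, hx2⟩
        have := hP x hx1
        rw [hext x hx1] at this
        rw [Subtype.coe_eta] at this
        rw [this] at hx2
        exact Bool.false_ne_true hx2
      rw [h1, mul_one, wt]; ring
    · rw [if_neg hP, mul_zero]
      push_neg at hP
      obtain ⟨y, hy, hne⟩ := hP
      have hσ : σ ⟨y, hsub hy⟩ = true := by
        rw [hext y hy] at hne
        exact Bool.not_eq_false _ |>.mp hne
      have h0 : ∏ x : {x // x ∈ T}, (if (x : Site d) ∈ C ∧ σ x = true then (0:ℝ) else 1) = 0 :=
        Finset.prod_eq_zero (Finset.mem_univ ⟨y, hsub hy⟩) (by rw [if_pos ⟨hy, hσ⟩])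
      rw [h0]; ring
  have hsum : dExp q T (fun ζ => if (∀ y ∈ C, ζ y = false) then c else 0) =
      c * ∑ σ : {x // x ∈ T} → Bool, ∏ x : {x // x ∈ T},
        ((if σ x then 1 - q else q) * (if (x : Site d) ∈ C ∧ σ x = true then 0 else 1)) := by
    rw [dExp, Finset.mul_sum]
    exact Finset.sum_congr rfl fun σ _ => hstep σ
  rw [hsum]
  have hpi := Finset.prod_univ_sum (fun _ : {x // x ∈ T} => (Finset.univ : Finset Bool))
    (fun x b => (if b then 1 - q else q) * (if (x : Site d) ∈ C ∧ b = true then (0:ℝ) else 1))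
  rw [Fintype.piFinset_univ] at hpi
  rw [← hpi]
  have hfac : ∀ x : {x // x ∈ T},
      (∑ b : Bool, (if b then 1 - q else q) * (if (x : Site d) ∈ C ∧ b = true then (0:ℝ) else 1)) =
        if (x : Site d) ∈ C then q else 1 := by
    intro x
    rw [Fintype.sum_bool]
    by_cases hx : (x : Site d) ∈ C
    · simp [hx]
    · simp [hx]
  rw [Finset.prod_congr rfl fun x _ => hfac x]
  have : ∏ x : {x // x ∈ T}, (if (x : Site d) ∈ C then q else 1) =
      ∏ z ∈ T, (if z ∈ C then q else 1) :=
    (Finset.prod_subtype T (fun _ => Iff.rfl) fun z => if z ∈ C then q else 1).symm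
  rw [this, ← Finset.prod_filter_mul_prod_filter_not T (· ∈ C)]
  have hfil : T.filter (· ∈ C) = C := by
    rw [Finset.filter_mem_eq_inter, Finset.inter_eq_right.mpr hsub]
  rw [Finset.prod_congr hfil fun z hz => if_pos hz,
    Finset.prod_congr rfl fun z hz => if_neg (Finset.mem_filter.mp hz).2,
    Finset.prod_const, Finset.prod_const, one_pow, mul_one]

lemma isLocal_indicator (C : Finset (Site d)) (c : ℝ) :
    IsLocal (fun ζ : Config d => if (∀ y ∈ C, ζ y = false) then c else 0) C := by
  intro η η' h
  dsimp only
  have : (∀ y ∈ C, η y = false) ↔ (∀ y ∈ C, η' y = false) := by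
    constructor
    · intro hh y hy; rw [← h y hy]; exact hh y hy
    · intro hh y hy; rw [h y hy]; exact hh y hy
  by_cases hP : ∀ y ∈ C, η y = false
  · rw [if_pos hP, if_pos (this.mp hP)]
  · rw [if_neg hP, if_neg (fun hc => hP (this.mpr hc))]

lemma dExpGen_indicator (q : ℝ) (C : Finset (Site d)) (c : ℝ) :
    dExpGen q (fun ζ : Config d => if (∀ y ∈ C, ζ y = false) then c else 0) = c * q ^ C.card := by
  rw [dExpGen_eq q (isLocal_indicator C c), dExp_indicator q C C Finset.Subset.rfl]

/-- reindexing equivalence for an image finset -/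
def imgEquiv (ρ : Equiv.Perm (Site d)) (S : Finset (Site d)) :
    {x : Site d // x ∈ S} ≃ {x : Site d // x ∈ S.image ρ} where
  toFun x := ⟨ρ x, Finset.mem_image_of_mem _ x.2⟩
  invFun y := ⟨ρ.symm y, by
    obtain ⟨z, hz, hzy⟩ := Finset.mem_image.mp y.2
    rw [← hzy, Equiv.symm_apply_apply]; exact hz⟩
  left_inv x := Subtype.ext (Equiv.symm_apply_apply ρ x)
  right_inv y := Subtype.ext (Equiv.apply_symm_apply ρ y)

lemma dExp_image (q : ℝ) (ρ : Equiv.Perm (Site d)) {F : Config d → ℝ} {S : Finset (Site d)}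
    (hF : IsLocal F S) :
    dExp q (S.image ρ) (fun ζ => F (fun y => ζ (ρ y))) = dExp q S F := by
  classical
  let E : ({x : Site d // x ∈ S} → Bool) ≃ ({x : Site d // x ∈ S.image ρ} → Bool) :=
    (imgEquiv ρ S).arrowCongr (Equiv.refl Bool)
  have hEeval : ∀ (τ : {x : Site d // x ∈ S} → Bool) (y : {x : Site d // x ∈ S.image ρ}),
      E τ y = τ ((imgEquiv ρ S).symm y) := fun _ _ => rfl
  have key : ∀ τ : {x : Site d // x ∈ S} → Bool,
      wt q (S.image ρ) (E τ) * F (fun y => extB (S.image ρ) true (E τ) (ρ y)) =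
        wt q S τ * F (extB S true τ) := by
    intro τ
    have hw : wt q (S.image ρ) (E τ) = wt q S τ := by
      rw [wt, wt]
      refine (Fintype.prod_equiv (imgEquiv ρ S) _ _ fun x => ?_).symm
      rw [hEeval]
      rw [(imgEquiv ρ S).symm_apply_apply x]
    have hFeq : F (fun y => extB (S.image ρ) true (E τ) (ρ y)) = F (extB S true τ) := by
      apply hF
      intro x hx
      have hmem : ρ x ∈ S.image ρ := Finset.mem_image_of_mem _ hx
      have h1 : extB (S.image ρ) true (E τ) (ρ x) = E τ ⟨ρ x, hmem⟩ := dif_pos hmem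
      have h2 : extB S true τ x = τ ⟨x, hx⟩ := dif_pos hx
      rw [h1, h2, hEeval]
      refine congrArg τ ?_
      exact Subtype.ext (Equiv.symm_apply_apply ρ x)
    rw [hw, hFeq]
  have : dExp q (S.image ρ) (fun ζ => F (fun y => ζ (ρ y))) =
      ∑ τ : {x : Site d // x ∈ S} → Bool,
        wt q (S.image ρ) (E τ) * F (fun y => extB (S.image ρ) true (E τ) (ρ y)) := by
    rw [show dExp q (S.image ρ) (fun ζ => F (fun y => ζ (ρ y))) =
        ∑ σ : {x : Site d // x ∈ S.image ρ} → Bool,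
          wt q (S.image ρ) σ * F (fun y => extB (S.image ρ) true σ (ρ y)) from rfl,
      ← Equiv.sum_comp E (fun σ => wt q (S.image ρ) σ *
        F (fun y => extB (S.image ρ) true σ (ρ y)))]
  rw [this, Finset.sum_congr rfl fun τ _ => key τ]
  rfl

lemma isLocal_comp (ρ : Equiv.Perm (Site d)) {F : Config d → ℝ} {S : Finset (Site d)}
    (hF : IsLocal F S) : IsLocal (fun ζ => F (fun y => ζ (ρ y))) (S.image ρ) := by
  intro η η' h
  exact hF _ _ fun x hx => h (ρ x) (Finset.mem_image_of_mem _ hx)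

lemma dExpGen_comp (q : ℝ) (ρ : Equiv.Perm (Site d)) {F : Config d → ℝ} {S : Finset (Site d)}
    (hF : IsLocal F S) : dExpGen q (fun ζ => F (fun y => ζ (ρ y))) = dExpGen q F := by
  rw [dExpGen_eq q (isLocal_comp ρ hF), dExpGen_eq q hF, dExp_image q ρ hF]

lemma dExp_add (q : ℝ) (T : Finset (Site d)) (F G : Config d → ℝ) :
    dExp q T (fun ζ => F ζ + G ζ) = dExp q T F + dExp q T G := by
  rw [dExp, dExp, dExp, ← Finset.sum_add_distrib]
  exact Finset.sum_congr rfl fun σ _ => by ring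

lemma dExp_smul (q : ℝ) (T : Finset (Site d)) (c : ℝ) (F : Config d → ℝ) :
    dExp q T (fun ζ => c * F ζ) = c * dExp q T F := by
  rw [dExp, dExp, Finset.mul_sum]
  exact Finset.sum_congr rfl fun σ _ => by ring

lemma dExp_sub (q : ℝ) (T : Finset (Site d)) (F G : Config d → ℝ) :
    dExp q T (fun ζ => F ζ - G ζ) = dExp q T F - dExp q T G := by
  rw [dExp, dExp, dExp, ← Finset.sum_sub_distrib]
  exact Finset.sum_congr rfl fun σ _ => by ring

lemma wt_nonneg {q : ℝ} (hq0 : 0 ≤ q) (hq1 : q ≤ 1) (T : Finset (Site d))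
    (σ : {x : Site d // x ∈ T} → Bool) : 0 ≤ wt q T σ := by
  refine Finset.prod_nonneg fun x _ => ?_
  by_cases h : σ x <;> simp [h] <;> linarith

lemma dExp_nonneg {q : ℝ} (hq0 : 0 ≤ q) (hq1 : q ≤ 1) (T : Finset (Site d))
    {F : Config d → ℝ} (hF : ∀ ζ, 0 ≤ F ζ) : 0 ≤ dExp q T F :=
  Finset.sum_nonneg fun σ _ => mul_nonneg (wt_nonneg hq0 hq1 T σ) (hF _)

lemma isLocal_cond0 {F : Config d → ℝ} {S : Finset (Site d)} (hF : IsLocal F S) :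
    IsLocal (cond0 F) S := by
  intro η η' h
  apply hF
  intro x hx
  show (if x = 0 then true else η x) = (if x = 0 then true else η' x)
  by_cases hx0 : x = 0
  · rw [if_pos hx0, if_pos hx0]
  · rw [if_neg hx0, if_neg hx0, h x hx]

lemma cond0_comp (ρ : Equiv.Perm (Site d)) (hρ : ρ 0 = 0) (F : Config d → ℝ) :
    cond0 (fun ζ => F (fun y => ζ (ρ y))) = fun ζ => cond0 F (fun y => ζ (ρ y)) := by
  funext ζ
  show F _ = F _
  congr 1
  funext y
  show (if ρ y = 0 then true else ζ (ρ y)) = (if y = 0 then true else ζ (ρ y))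
  have : ρ y = 0 ↔ y = 0 := by
    constructor
    · intro h; exact ρ.injective (by rw [h, hρ])
    · intro h; rw [h, hρ]
  by_cases hy : y = 0
  · rw [if_pos hy, if_pos (this.mpr hy)]
  · rw [if_neg hy, if_neg (fun hc => hy (this.mp hc))]

end Infra2

section Aux2

variable {d : ℕ}

/-- The site bijection underlying the tracer shift for permutation `σ`. -/
def rhoP (σ : Equiv.Perm (Site d)) : Equiv.Perm (Site d) :=
  (Equiv.addRight (σ 0)).trans σ.symm

lemma rhoP_apply (σ : Equiv.Perm (Site d)) (w : Site d) : rhoP σ w = σ.symm (w + σ 0) := rfl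

lemma rhoP_zero (σ : Equiv.Perm (Site d)) : rhoP σ 0 = 0 := by
  rw [rhoP_apply, zero_add, Equiv.symm_apply_apply]

lemma tracer_shift (σ : Equiv.Perm (Site d)) (ζ : Config d) :
    tauC (-(σ 0)) (permAct σ ζ) = fun y => ζ (rhoP σ y) := by
  funext w
  show permAct σ ζ (w - -(σ 0)) = ζ (rhoP σ w)
  rw [sub_neg_eq_add]
  rfl

lemma image_rhoP {σ : Equiv.Perm (Site d)} {C : Finset (Site d)}
    (him : Finset.image (⇑σ) C = Finset.image (fun y => σ 0 + y) C) :
    Finset.image (⇑(rhoP σ)) C = C := by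
  have h1 : Finset.image (⇑(rhoP σ)) C =
      Finset.image (⇑σ.symm ∘ (fun y => y + σ 0)) C :=
    Finset.image_congr fun y _ => rfl
  have h2 : Finset.image (fun y => y + σ 0) C = Finset.image (fun y => σ 0 + y) C :=
    Finset.image_congr fun y _ => add_comm y (σ 0)
  have h3 : (⇑σ.symm ∘ ⇑σ) = id := by funext z; exact σ.symm_apply_apply z
  rw [h1, ← Finset.image_image, h2, ← him, Finset.image_image, h3, Finset.image_id]

lemma rhoP_symm_apply (σ : Equiv.Perm (Site d)) (w : Site d) :
    (rhoP σ).symm w = σ w - σ 0 := by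
  apply (rhoP σ).injective
  rw [Equiv.apply_symm_apply, rhoP_apply, sub_add_cancel, Equiv.symm_apply_apply]

lemma conjPerm_zero (σ : Equiv.Perm (Site d)) : conjPerm σ 0 = -(σ 0) := by
  show σ.symm (0 + σ 0) + -(σ 0) = -(σ 0)
  rw [zero_add, Equiv.symm_apply_apply, zero_add]

lemma rhoP_conjPerm_apply (σ : Equiv.Perm (Site d)) (w : Site d) :
    rhoP (conjPerm σ) w = (rhoP σ).symm w := by
  rw [rhoP_symm_apply, rhoP_apply, conjPerm_zero]
  apply (conjPerm σ).injective
  rw [Equiv.apply_symm_apply]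
  show w + -(σ 0) = σ.symm ((σ w - σ 0) + σ 0) + -(σ 0)
  rw [sub_add_cancel, Equiv.symm_apply_apply]

lemma image_rhoP_conj {σ : Equiv.Perm (Site d)} {C : Finset (Site d)}
    (h : Finset.image (⇑(rhoP σ)) C = C) :
    Finset.image (⇑(rhoP (conjPerm σ))) C = C := by
  have h1 : Finset.image (⇑(rhoP (conjPerm σ))) C = Finset.image (⇑(rhoP σ).symm) C :=
    Finset.image_congr fun w _ => rhoP_conjPerm_apply σ w
  rw [h1]
  conv_lhs => rw [← h]
  rw [Finset.image_image]
  have h2 : (⇑(rhoP σ).symm ∘ ⇑(rhoP σ)) = id := by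
    funext z; exact (rhoP σ).symm_apply_apply z
  rw [h2, Finset.image_id]

/-- The indicator that `C` is empty. -/
def indE (C : Finset (Site d)) : Config d → ℝ :=
  fun ζ => if (∀ y ∈ C, ζ y = false) then 1 else 0

lemma indE_apply (C : Finset (Site d)) (ζ : Config d) :
    indE C ζ = if (∀ y ∈ C, ζ y = false) then 1 else 0 := rfl

lemma indE_nonneg (C : Finset (Site d)) (ζ : Config d) : 0 ≤ indE C ζ := by
  rw [indE_apply]
  by_cases h : ∀ y ∈ C, ζ y = false
  · rw [if_pos h]; norm_num
  · rw [if_neg h]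

lemma isLocal_indE (C : Finset (Site d)) : IsLocal (indE C) C := isLocal_indicator C 1

lemma indE_comp {C : Finset (Site d)} {ρ : Equiv.Perm (Site d)}
    (hC : Finset.image ⇑ρ C = C) (ζ : Config d) :
    indE C (fun y => ζ (ρ y)) = indE C ζ := by
  have hiff : (∀ y ∈ C, ζ (ρ y) = false) ↔ (∀ z ∈ C, ζ z = false) := by
    constructor
    · intro hyp z hz
      have hz' : z ∈ Finset.image ⇑ρ C := hC.symm ▸ hz
      obtain ⟨y, hy, hyz⟩ := Finset.mem_image.mp hz'
      rw [← hyz]; exact hyp y hy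
    · intro hyp y hy
      exact hyp _ (hC ▸ Finset.mem_image_of_mem _ hy)
  rw [indE_apply, indE_apply]
  by_cases hP : ∀ z ∈ C, ζ z = false
  · rw [if_pos (hiff.mpr hP), if_pos hP]
  · rw [if_neg (fun hcc => hP (hiff.mp hcc)), if_neg hP]

lemma indE_cond0 {C : Finset (Site d)} (h0 : (0 : Site d) ∉ C) (ζ : Config d) :
    indE C (fun z => if z = 0 then true else ζ z) = indE C ζ := by
  have hiff : (∀ y ∈ C, (if y = 0 then true else ζ y) = false) ↔ (∀ y ∈ C, ζ y = false) := by
    constructor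
    · intro h y hy
      have := h y hy
      rwa [if_neg (fun hc : y = 0 => h0 (hc ▸ hy))] at this
    · intro h y hy
      rw [if_neg (fun hc : y = 0 => h0 (hc ▸ hy))]
      exact h y hy
  rw [indE_apply, indE_apply]
  by_cases hP : ∀ y ∈ C, ζ y = false
  · rw [if_pos (hiff.mpr hP), if_pos hP]
  · rw [if_neg (fun hc => hP (hiff.mp hc)), if_neg hP]

lemma term_zero (q : ℝ) {Chat : Finset (Site d)} (h0 : (0 : Site d) ∉ Chat)
    (σ : Equiv.Perm (Site d)) (u : Fin d → ℝ) :
    dExpGen0 q (tracerSummand (auxRate Chat) u σ fun _ => 0) =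
      (dot u (σ 0)) ^ 2 * q ^ Chat.card := by
  have hfun : cond0 (tracerSummand (auxRate Chat) u σ fun _ => 0) =
      fun ζ : Config d => if (∀ y ∈ Chat, ζ y = false) then (dot u (σ 0)) ^ 2 else 0 := by
    funext ζ
    have h1 : cond0 (tracerSummand (auxRate Chat) u σ fun _ => 0) ζ =
        indE Chat (fun z => if z = 0 then true else ζ z) * (dot u (σ 0) + 0 - 0) ^ 2 := rfl
    rw [h1, indE_cond0 h0, indE_apply]
    by_cases hP : ∀ y ∈ Chat, ζ y = false
    · rw [if_pos hP, if_pos hP]; ring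
    · rw [if_neg hP, if_neg hP]; ring
  show dExpGen q (cond0 (tracerSummand (auxRate Chat) u σ fun _ => 0)) = _
  rw [hfun, dExpGen_indicator]

lemma term_ge {q : ℝ} (hq0 : 0 < q) (hq1 : q < 1) {Chat : Finset (Site d)}
    (h0 : (0 : Site d) ∉ Chat) (σ : Equiv.Perm (Site d)) (u : Fin d → ℝ)
    (hC : Finset.image (⇑(rhoP σ)) Chat = Chat)
    {f : Config d → ℝ} {Sf : Finset (Site d)} (hf : IsLocal f Sf) :
    (dot u (σ 0)) ^ 2 * q ^ Chat.card ≤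
      dExpGen0 q (tracerSummand (auxRate Chat) u σ f) := by
  classical
  set B : Finset (Site d) := Chat ∪ Sf ∪ Sf.image ⇑(rhoP σ) with hBdef
  have hChatB : Chat ⊆ B := fun x hx => Finset.mem_union_left _ (Finset.mem_union_left _ hx)
  have hSB : Sf ⊆ B := fun x hx => Finset.mem_union_left _ (Finset.mem_union_right _ hx)
  have hSiB : Sf.image ⇑(rhoP σ) ⊆ B := fun x hx => Finset.mem_union_right _ hx
  -- locality of the full summand
  have hlocF : IsLocal (tracerSummand (auxRate Chat) u σ f) B := by
    intro η η' hag
    have h1 : indE Chat η = indE Chat η' :=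
      isLocal_indE Chat η η' fun x hx => hag x (hChatB hx)
    have h2 : f η = f η' := hf η η' fun x hx => hag x (hSB hx)
    have h3 : f (tauC (-(σ 0)) (permAct σ η)) = f (tauC (-(σ 0)) (permAct σ η')) := by
      rw [tracer_shift, tracer_shift]
      exact hf _ _ fun x hx => hag (rhoP σ x) (hSiB (Finset.mem_image_of_mem _ hx))
    show indE Chat η * (dot u (σ 0) + f (tauC (-(σ 0)) (permAct σ η)) - f η) ^ 2 =
      indE Chat η' * (dot u (σ 0) + f (tauC (-(σ 0)) (permAct σ η')) - f η') ^ 2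
    rw [h1, h2, h3]
  have hlocf2 : IsLocal (fun η : Config d => indE Chat η * f η) (Chat ∪ Sf) := by
    intro η η' hag
    have h1 : indE Chat η = indE Chat η' :=
      isLocal_indE Chat η η' fun x hx => hag x (Finset.mem_union_left _ hx)
    have h2 : f η = f η' := hf η η' fun x hx => hag x (Finset.mem_union_right _ hx)
    show indE Chat η * f η = indE Chat η' * f η'
    rw [h1, h2]
  -- decomposition of the integrand
  have hdecomp : cond0 (tracerSummand (auxRate Chat) u σ f) = fun ζ =>
      indE Chat ζ * (dot u (σ 0)) ^ 2 +
        ((2 * dot u (σ 0)) *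
            (cond0 (fun η => indE Chat (fun y => η (rhoP σ y)) * f (fun y => η (rhoP σ y))) ζ -
              cond0 (fun η => indE Chat η * f η) ζ) +
          cond0 (fun η => indE Chat η * (f (fun y => η (rhoP σ y)) - f η) ^ 2) ζ) := by
    funext ζ
    have hz : cond0 (tracerSummand (auxRate Chat) u σ f) ζ =
        indE Chat (fun z => if z = 0 then true else ζ z) *
          (dot u (σ 0) +
            f (tauC (-(σ 0)) (permAct σ fun z => if z = 0 then true else ζ z)) -
            f fun z => if z = 0 then true else ζ z) ^ 2 := rfl
    have hr1 : cond0 (fun η => indE Chat (fun y => η (rhoP σ y)) * f (fun y => η (rhoP σ y))) ζ =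
        indE Chat (fun y => if rhoP σ y = 0 then true else ζ (rhoP σ y)) *
          f (fun y => if rhoP σ y = 0 then true else ζ (rhoP σ y)) := rfl
    have hr2 : cond0 (fun η => indE Chat η * f η) ζ =
        indE Chat (fun z => if z = 0 then true else ζ z) *
          f (fun z => if z = 0 then true else ζ z) := rfl
    have hr3 : cond0 (fun η => indE Chat η * (f (fun y => η (rhoP σ y)) - f η) ^ 2) ζ =
        indE Chat (fun z => if z = 0 then true else ζ z) *
          (f (fun y => if rhoP σ y = 0 then true else ζ (rhoP σ y)) -
            f fun z => if z = 0 then true else ζ z) ^ 2 := rfl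
    have hIrho : indE Chat (fun y => if rhoP σ y = 0 then true else ζ (rhoP σ y)) =
        indE Chat (fun z => if z = 0 then true else ζ z) :=
      indE_comp hC (fun z => if z = 0 then true else ζ z)
    rw [hz, tracer_shift, hr1, hr2, hr3, hIrho, indE_cond0 h0]
    ring
  -- the main expectation identity
  have hmain : dExpGen0 q (tracerSummand (auxRate Chat) u σ f) =
      dExp q B (cond0 (tracerSummand (auxRate Chat) u σ f)) :=
    dExpGen_eq q (isLocal_cond0 hlocF)
  -- first term
  have hA1 : dExp q B (fun ζ => indE Chat ζ * (dot u (σ 0)) ^ 2) =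
      (dot u (σ 0)) ^ 2 * q ^ Chat.card := by
    have heq : (fun ζ : Config d => indE Chat ζ * (dot u (σ 0)) ^ 2) =
        fun ζ => if (∀ y ∈ Chat, ζ y = false) then (dot u (σ 0)) ^ 2 else 0 := by
      funext ζ
      rw [indE_apply]
      by_cases hP : ∀ y ∈ Chat, ζ y = false
      · rw [if_pos hP, if_pos hP, one_mul]
      · rw [if_neg hP, if_neg hP, zero_mul]
    rw [heq, dExp_indicator q Chat B hChatB]
  -- the middle term vanishes
  have hcomp : cond0 (fun η : Config d =>
        indE Chat (fun y => η (rhoP σ y)) * f (fun y => η (rhoP σ y))) =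
      fun ζ => cond0 (fun η : Config d => indE Chat η * f η) (fun y => ζ (rhoP σ y)) :=
    cond0_comp (rhoP σ) (rhoP_zero σ) (fun η => indE Chat η * f η)
  have hmid : dExp q B (cond0 (fun η : Config d =>
        indE Chat (fun y => η (rhoP σ y)) * f (fun y => η (rhoP σ y)))) =
      dExp q B (cond0 (fun η : Config d => indE Chat η * f η)) := by
    rw [hcomp]
    have l1 : IsLocal (fun ζ : Config d =>
        cond0 (fun η : Config d => indE Chat η * f η) (fun y => ζ (rhoP σ y)))
        ((Chat ∪ Sf).image ⇑(rhoP σ)) :=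
      isLocal_comp (rhoP σ) (isLocal_cond0 hlocf2)
    have him2 : (Chat ∪ Sf).image ⇑(rhoP σ) ⊆ B := by
      rw [Finset.image_union]
      exact Finset.union_subset (by rw [hC]; exact hChatB) hSiB
    rw [dExp_subset q l1 him2, dExp_image q (rhoP σ) (isLocal_cond0 hlocf2),
      dExp_subset q (isLocal_cond0 hlocf2) (Finset.union_subset hChatB hSB)]
  -- the quadratic term is nonnegative
  have hpos : 0 ≤ dExp q B (cond0 (fun η : Config d =>
      indE Chat η * (f (fun y => η (rhoP σ y)) - f η) ^ 2)) := by
    refine dExp_nonneg (le_of_lt hq0) (le_of_lt hq1) B fun ζ => ?_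
    exact mul_nonneg (indE_nonneg _ _) (sq_nonneg _)
  rw [hmain, hdecomp, dExp_add, dExp_add, dExp_smul, dExp_sub, hA1, hmid, sub_self,
    mul_zero, zero_add]
  linarith [hpos]

end Aux2

section Aux3

variable {d : ℕ}

lemma unit_injective {i j : Fin d} (h : unit i = unit j) : i = j := by
  by_contra hij
  have := congrFun h i
  rw [unit, unit] at this
  rw [if_pos rfl, if_neg (fun hc : i = j => hij hc)] at this
  exact one_ne_zero this

lemma unit_ne_neg (i j : Fin d) : unit i ≠ -unit j := by
  intro h
  have := congrFun h i
  rw [unit] at this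
  rw [if_pos rfl] at this
  have h2 : (-unit j) i = -(unit j i) := rfl
  rw [h2, unit] at this
  by_cases hc : i = j
  · rw [if_pos hc] at this; omega
  · rw [if_neg hc] at this; omega

lemma dot_unit (u : Fin d → ℝ) (i : Fin d) : dot u (unit i) = u i := by
  rw [dot]
  have h1 : ∀ j : Fin d, u j * ((unit i j : ℤ) : ℝ) = if j = i then u j else 0 := by
    intro j
    rw [unit]
    by_cases h : j = i
    · rw [if_pos h, if_pos h]; norm_num
    · rw [if_neg h, if_neg h]; norm_num
  rw [Finset.sum_congr rfl fun j _ => h1 j, Finset.sum_ite_eq' Finset.univ i u,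
    if_pos (Finset.mem_univ i)]

lemma dot_neg (u : Fin d → ℝ) (y : Site d) : dot u (-y) = -dot u y := by
  rw [dot, dot, ← Finset.sum_neg_distrib]
  refine Finset.sum_congr rfl fun i _ => ?_
  have h1 : (-y) i = -(y i) := rfl
  rw [h1, Int.cast_neg]
  ring

lemma tsum_auxSigma {σs : Fin d → Equiv.Perm (Site d)} (h0i : ∀ i, σs i 0 = unit i)
    (F : Equiv.Perm (Site d) → ℝ) :
    ∑' σ : (auxSigma σs), F (σ : Equiv.Perm (Site d)) =
      ∑ i, F (σs i) + ∑ i, F (conjPerm (σs i)) := by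
  classical
  let φ : Fin d ⊕ Fin d → (auxSigma σs : Set (Equiv.Perm (Site d))) :=
    fun x => Sum.rec (fun i => ⟨σs i, ⟨i, Or.inl rfl⟩⟩)
      (fun i => ⟨conjPerm (σs i), ⟨i, Or.inr rfl⟩⟩) x
  have hφ : Function.Bijective φ := by
    constructor
    · rintro (i | i) (j | j) hij <;>
        simp only [φ, Subtype.mk.injEq] at hij
      · have := congrArg (fun τ : Equiv.Perm (Site d) => τ 0) (congrArg Subtype.val hij)
        simp only at this
        rw [h0i, h0i] at this
        rw [unit_injective this]
      · exfalso
        have := congrArg (fun τ : Equiv.Perm (Site d) => τ 0) (congrArg Subtype.val hij)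
        simp only at this
        rw [h0i, conjPerm_zero, h0i] at this
        exact unit_ne_neg i j this
      · exfalso
        have := congrArg (fun τ : Equiv.Perm (Site d) => τ 0) (congrArg Subtype.val hij)
        simp only at this
        rw [h0i, conjPerm_zero, h0i] at this
        exact unit_ne_neg j i this.symm
      · have := congrArg (fun τ : Equiv.Perm (Site d) => τ 0) (congrArg Subtype.val hij)
        simp only at this
        rw [conjPerm_zero, conjPerm_zero, h0i, h0i] at this
        rw [unit_injective (neg_injective this)]
    · rintro ⟨τ, i, (h | h)⟩
      · exact ⟨Sum.inl i, Subtype.ext h.symm⟩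
      · exact ⟨Sum.inr i, Subtype.ext h.symm⟩
  rw [← Equiv.tsum_eq (Equiv.ofBijective φ hφ)
    (fun σ : (auxSigma σs : Set (Equiv.Perm (Site d))) => F (σ : Equiv.Perm (Site d))),
    tsum_fintype, Fintype.sum_sum_type]
  rfl

end Aux3

/-- For the auxiliary tracer model attached to `Ĉ` and the
permutations `σ_{±1}, …, σ_{±d}`, the variational infimum is attained at constant `f`
and equals `2 q^{|Ĉ|} ‖u‖²`; equivalently `u·D̂_s u = q^{|Ĉ|} ‖u‖²`, which is positive
for `u ≠ 0`. -/
theorem auxiliary_tracer_self_diffusion (d : ℕ) (hd : 0 < d)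
    (Chat : Finset (Site d)) (h0 : (0 : Site d) ∉ Chat)
    (σs : Fin d → Equiv.Perm (Site d))
    (hfr : ∀ i, FinRangePerm (σs i))
    (h0i : ∀ i, σs i 0 = unit i)
    (him : ∀ i, Finset.image (⇑(σs i)) Chat = Finset.image (fun y => unit i + y) Chat) :
    ∀ q ∈ Set.Ioo (0 : ℝ) 1, ∀ u : Fin d → ℝ,
      (∑' σ : auxSigma σs, dExpGen0 q
          (tracerSummand (auxRate Chat) u (σ : Equiv.Perm (Site d)) fun _ => 0)) =
        2 * q ^ Chat.card * ∑ α, (u α) ^ 2 ∧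
      sInf (tracerSet (auxSigma σs) (auxRate Chat) q u) =
        2 * q ^ Chat.card * ∑ α, (u α) ^ 2 ∧
      tracerDs (auxSigma σs) (auxRate Chat) q u = q ^ Chat.card * ∑ α, (u α) ^ 2 ∧
      (u ≠ 0 → 0 < tracerDs (auxSigma σs) (auxRate Chat) q u) := by
  intro q hq u
  obtain ⟨hq0, hq1⟩ := hq
  have hCimg : ∀ i, Finset.image (⇑(rhoP (σs i))) Chat = Chat := by
    intro i
    refine image_rhoP ?_
    rw [h0i i]
    exact him i
  have hCimg' : ∀ i, Finset.image (⇑(rhoP (conjPerm (σs i)))) Chat = Chat :=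
    fun i => image_rhoP_conj (hCimg i)
  -- value at f = 0
  have part1 : (∑' σ : auxSigma σs, dExpGen0 q
      (tracerSummand (auxRate Chat) u (σ : Equiv.Perm (Site d)) fun _ => 0)) =
      2 * q ^ Chat.card * ∑ α, (u α) ^ 2 := by
    have ht : (∑' σ : auxSigma σs, dExpGen0 q
        (tracerSummand (auxRate Chat) u (σ : Equiv.Perm (Site d)) fun _ => 0)) =
        (∑ i : Fin d, dExpGen0 q (tracerSummand (auxRate Chat) u (σs i) fun _ => 0)) +
          ∑ i : Fin d, dExpGen0 q (tracerSummand (auxRate Chat) u (conjPerm (σs i)) fun _ => 0) :=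
      tsum_auxSigma h0i (fun τ => dExpGen0 q (tracerSummand (auxRate Chat) u τ fun _ => 0))
    rw [ht]
    have h1 : ∀ i : Fin d,
        dExpGen0 q (tracerSummand (auxRate Chat) u (σs i) fun _ => 0) =
          (u i) ^ 2 * q ^ Chat.card := by
      intro i
      rw [term_zero q h0, h0i i, dot_unit]
    have h2 : ∀ i : Fin d,
        dExpGen0 q (tracerSummand (auxRate Chat) u (conjPerm (σs i)) fun _ => 0) =
          (u i) ^ 2 * q ^ Chat.card := by
      intro i
      rw [term_zero q h0, conjPerm_zero, h0i i, dot_neg, dot_unit, neg_sq]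
    rw [Finset.sum_congr rfl fun i _ => h1 i, Finset.sum_congr rfl fun i _ => h2 i,
      ← Finset.sum_mul]
    ring
  -- lower bound for arbitrary local f
  have hlb : ∀ E ∈ tracerSet (auxSigma σs) (auxRate Chat) q u,
      2 * q ^ Chat.card * ∑ α, (u α) ^ 2 ≤ E := by
    rintro E ⟨f, S, hf, rfl⟩
    have ht : (∑' σ : auxSigma σs, dExpGen0 q
        (tracerSummand (auxRate Chat) u (σ : Equiv.Perm (Site d)) f)) =
        (∑ i : Fin d, dExpGen0 q (tracerSummand (auxRate Chat) u (σs i) f)) +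
          ∑ i : Fin d, dExpGen0 q (tracerSummand (auxRate Chat) u (conjPerm (σs i)) f) :=
      tsum_auxSigma h0i (fun τ => dExpGen0 q (tracerSummand (auxRate Chat) u τ f))
    rw [ht]
    have h1 : ∀ i : Fin d, (u i) ^ 2 * q ^ Chat.card ≤
        dExpGen0 q (tracerSummand (auxRate Chat) u (σs i) f) := by
      intro i
      have := term_ge hq0 hq1 h0 (σs i) u (hCimg i) hf
      rwa [h0i i, dot_unit] at this
    have h2 : ∀ i : Fin d, (u i) ^ 2 * q ^ Chat.card ≤
        dExpGen0 q (tracerSummand (auxRate Chat) u (conjPerm (σs i)) f) := by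
      intro i
      have := term_ge hq0 hq1 h0 (conjPerm (σs i)) u (hCimg' i) hf
      rwa [conjPerm_zero, h0i i, dot_neg, dot_unit, neg_sq] at this
    have e1 : 2 * q ^ Chat.card * ∑ α, (u α) ^ 2 =
        (∑ i : Fin d, (u i) ^ 2 * q ^ Chat.card) +
          ∑ i : Fin d, (u i) ^ 2 * q ^ Chat.card := by
      rw [← Finset.sum_mul]; ring
    rw [e1]
    exact add_le_add (Finset.sum_le_sum fun i _ => h1 i)
      (Finset.sum_le_sum fun i _ => h2 i)
  have hmem : 2 * q ^ Chat.card * ∑ α, (u α) ^ 2 ∈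
      tracerSet (auxSigma σs) (auxRate Chat) q u :=
    ⟨fun _ => 0, ∅, fun η η' _ => rfl, part1.symm⟩
  have hsInf : sInf (tracerSet (auxSigma σs) (auxRate Chat) q u) =
      2 * q ^ Chat.card * ∑ α, (u α) ^ 2 :=
    le_antisymm (csInf_le ⟨_, fun E hE => hlb E hE⟩ hmem) (le_csInf ⟨_, hmem⟩ hlb)
  have hDs : tracerDs (auxSigma σs) (auxRate Chat) q u =
      q ^ Chat.card * ∑ α, (u α) ^ 2 := by
    rw [tracerDs, hsInf]; ring
  refine ⟨part1, hsInf, hDs, ?_⟩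
  intro hu
  rw [hDs]
  have hsum : 0 < ∑ α, (u α) ^ 2 := by
    obtain ⟨i, hi⟩ := Function.ne_iff.mp hu
    refine Finset.sum_pos' (fun j _ => sq_nonneg _) ⟨i, Finset.mem_univ i, ?_⟩
    exact lt_of_le_of_ne (sq_nonneg _) (Ne.symm (pow_ne_zero 2 hi))
  exact mul_pos (pow_pos hq0 _) hsum

end KCLGd
end
end
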